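/- Let u ≥ 1 be an integer with u ≡ 1 (mod p^{α+1}). Then there exists a unique Witt vector c ∈ 𝕎(A) such that for every n ≥ 0 one has [p]_{q^{p^{n+α}}} · (n-th ghost component of c) = q^{u·p^n} − q^{p^n} in A. (This is the ghost-component description of the element c_u of Proposition 3.19, which exhibits the isomorphism between ρ∘γ_u and ρ for u ∈ 1 + p^{α+1}ℤ_p.) -/

import Mathlib

open Finset

/-- The q-analogue `[n]_t = ∑_{i=0}^{n-1} t^i`. -/
def qan {A : Type*} [CommRing A] (t : A) (n : ℕ) : A := ∑ i ∈ Finset.range n, t ^ i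

/-- `A := W(k)⟦q−1⟧`; `q` denotes `1` plus the power series variable. -/
noncomputable def qq (p : ℕ) [Fact p.Prime] (k : Type*) [CommRing k] :
    PowerSeries (WittVector p k) :=
  1 + PowerSeries.X

lemma ghost_eq_sum {p : ℕ} [hp : Fact p.Prime] {A : Type*} [CommRing A] (x : WittVector p A)
    (n : ℕ) :
    WittVector.ghostComponent n x =
      ∑ i ∈ Finset.range (n + 1), (p : A) ^ i * x.coeff i ^ p ^ (n - i) := by
  rw [WittVector.ghostComponent_apply, aeval_wittPolynomial]

lemma ghost_injective {p : ℕ} [hp : Fact p.Prime] {A : Type*} [CommRing A] [IsDomain A]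
    (hpA : (p : A) ≠ 0) {x y : WittVector p A}
    (h : ∀ n, WittVector.ghostComponent n x = WittVector.ghostComponent n y) : x = y := by
  ext n
  induction n using Nat.strong_induction_on with
  | _ n ih =>
    have hn := h n
    rw [ghost_eq_sum, ghost_eq_sum, Finset.sum_range_succ, Finset.sum_range_succ] at hn
    have hs : ∑ i ∈ Finset.range n, (p : A) ^ i * x.coeff i ^ p ^ (n - i)
        = ∑ i ∈ Finset.range n, (p : A) ^ i * y.coeff i ^ p ^ (n - i) :=
      Finset.sum_congr rfl fun i hi => by rw [ih i (Finset.mem_range.mp hi)]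
    rw [hs] at hn
    have hn' := add_left_cancel hn
    simp only [Nat.sub_self, pow_zero, pow_one] at hn'
    exact mul_left_cancel₀ (pow_ne_zero n hpA) hn'

/-- Let `u ≥ 1` with `u ≡ 1 (mod p^{α+1})`.  Then there is a unique Witt
vector `c ∈ 𝕎(A)` such that for every `n ≥ 0` one has
`[p]_{q^{p^{n+α}}} · (n-th ghost component of c) = q^{u·p^n} − q^{p^n}` in `A`. -/
theorem stmt8 (p : ℕ) [Fact p.Prime] (α : ℕ)
    (k : Type*) [Field k] [CharP k p] [PerfectRing k p]
    (u : ℕ) (hu : 1 ≤ u) (hcong : u ≡ 1 [MOD p ^ (α + 1)]) :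
    ∃! c : WittVector p (PowerSeries (WittVector p k)), ∀ n : ℕ,
      qan ((qq p k) ^ p ^ (n + α)) p * WittVector.ghostComponent n c =
        (qq p k) ^ (u * p ^ n) - (qq p k) ^ p ^ n := by
  set A := PowerSeries (WittVector p k) with hA
  have hpA : (p : A) ≠ 0 := by
    intro h
    have h2 : (PowerSeries.constantCoeff (R := WittVector p k)) ((p : A)) = 0 := by
      rw [h, map_zero]
    rw [map_natCast] at h2
    exact WittVector.p_nonzero p k h2
  obtain ⟨v, hv⟩ : p ^ (α + 1) ∣ u - 1 := (Nat.modEq_iff_dvd' hu).mp hcong.symm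
  have huv : u = 1 + p ^ (α + 1) * v := by omega
  set Q : A := qq p k with hQ
  set T : WittVector p A := WittVector.teichmuller p Q with hT
  set c : WittVector p A := T * (T ^ p ^ α - 1) * qan (T ^ p ^ (α + 1)) v with hc
  have hmain : ∀ n : ℕ, qan (Q ^ p ^ (n + α)) p * WittVector.ghostComponent n c
      = Q ^ (u * p ^ n) - Q ^ p ^ n := by
    intro n
    have hg : ∀ m : ℕ, WittVector.ghostComponent n (T ^ m) = Q ^ (p ^ n * m) := by
      intro m
      rw [map_pow, hT, WittVector.ghostComponent_teichmuller, ← pow_mul]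
    have hgT : WittVector.ghostComponent n T = Q ^ p ^ n := by
      rw [hT, WittVector.ghostComponent_teichmuller]
    have hg1 : WittVector.ghostComponent n (T ^ p ^ α) = Q ^ p ^ (n + α) := by
      rw [hg]; congr 1; rw [pow_add]
    have hgan : WittVector.ghostComponent n (qan (T ^ p ^ (α + 1)) v)
        = qan ((Q ^ p ^ (n + α)) ^ p) v := by
      simp only [qan, map_sum, map_pow, hT, WittVector.ghostComponent_teichmuller]
      refine Finset.sum_congr rfl fun i _ => ?_
      rw [← pow_mul, ← pow_mul, ← pow_mul, ← pow_mul]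
      congr 1
      rw [pow_succ, pow_add]; ring
    rw [hc, map_mul, map_mul, map_sub, map_one, hgT, hg1, hgan]
    set R : A := Q ^ p ^ (n + α) with hR
    have key : qan R p * (Q ^ p ^ n * (R - 1) * qan (R ^ p) v)
        = Q ^ p ^ n * ((qan R p * (R - 1)) * qan (R ^ p) v) := by ring
    rw [key]
    have key1 : qan R p * (R - 1) = R ^ p - 1 := by rw [qan, geom_sum_mul]
    have key2 : (R ^ p - 1) * qan (R ^ p) v = (R ^ p) ^ v - 1 := by
      rw [mul_comm, qan, geom_sum_mul]
    rw [key1, key2, mul_sub, mul_one]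
    congr 1
    rw [hR, ← pow_mul, ← pow_mul, ← pow_add]
    congr 1
    rw [huv, pow_succ, pow_add]
    ring
  have hqan_ne : ∀ n : ℕ, qan (Q ^ p ^ (n + α)) p ≠ 0 := by
    intro n h
    have h2 : (PowerSeries.constantCoeff (R := WittVector p k)) (qan (Q ^ p ^ (n + α)) p) = 0 := by
      rw [h, map_zero]
    simp only [qan, map_sum, map_pow, hQ, qq, map_add, map_one,
      PowerSeries.constantCoeff_X, add_zero, one_pow, Finset.sum_const,
      Finset.card_range, nsmul_eq_mul, mul_one] at h2
    exact WittVector.p_nonzero p k (by exact_mod_cast h2)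
  exact ⟨c, hmain, fun c' hc' => ghost_injective hpA fun n =>
    mul_left_cancel₀ (hqan_ne n) ((hc' n).trans (hmain n).symm)⟩
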